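/- arXiv:0809.5102 — 3 statements merged into one kernel-verified Lean document; each statement's English description precedes it below -/
import Mathlib

section
/- For any rate matrix A (i.e., an N×N real matrix whose off-diagonal entries are nonnegative and whose columns sum to zero) and any standard basis vector V = e_i of ℝᴺ, the matrix diag(AV) − diag(V)A* − A diag(V) is symmetric and positive semidefinite. -/
/-- The seminorm-defining matrix `diag(AV) − diag(V)A* − A diag(V)`. -/
noncomputable def bform {N : ℕ} (A : Matrix (Fin N) (Fin N) ℝ) (V : Fin N → ℝ) :
    Matrix (Fin N) (Fin N) ℝ :=
  Matrix.diagonal (A.mulVec V) - Matrix.diagonal V * A.transpose - A * Matrix.diagonal V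

theorem stmt_2 {N : ℕ} (A : Matrix (Fin N) (Fin N) ℝ)
    (hoff : ∀ j k : Fin N, j ≠ k → 0 ≤ A j k)
    (hcol : ∀ k : Fin N, ∑ j, A j k = 0)
    (i : Fin N) :
    (bform A (Pi.single i 1)).IsSymm ∧ (bform A (Pi.single i 1)).PosSemidef := by
  have hB : ∀ j k, bform A (Pi.single i 1) j k =
      (if j = k then A j i else 0) - (if j = i then A k j else 0)
        - (if k = i then A j k else 0) := by
    intro j k
    simp [bform, Matrix.sub_apply, Matrix.diagonal_mul, Matrix.mul_diagonal,
      Matrix.diagonal_apply, Matrix.mulVec, dotProduct, Pi.single_apply]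
  have hsymm : (bform A (Pi.single i 1)).IsSymm := by
    unfold bform
    simp only [Matrix.IsSymm, Matrix.transpose_sub, Matrix.transpose_mul,
      Matrix.transpose_transpose, Matrix.diagonal_transpose]
    abel
  refine ⟨hsymm, Matrix.posSemidef_iff_dotProduct_mulVec.mpr ⟨?_, ?_⟩⟩
  · rw [Matrix.IsHermitian, Matrix.conjTranspose_eq_transpose_of_trivial]
    exact hsymm
  · intro x
    have h1 : ∀ j, (bform A (Pi.single i 1)).mulVec x j
        = A j i * x j - (if j = i then ∑ k, A k j * x k else 0) - A j i * x i := by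
      intro j
      simp only [Matrix.mulVec, dotProduct, hB, sub_mul]
      rw [Finset.sum_sub_distrib, Finset.sum_sub_distrib]
      congr 1
      · congr 1
        · simp [ite_mul, Finset.sum_ite_eq, mul_comm]
        · by_cases h : j = i <;> simp [h]
      · simp [ite_mul, Finset.sum_ite_eq']
    have key : dotProduct x ((bform A (Pi.single i 1)).mulVec x)
        = ∑ j, A j i * (x j - x i) ^ 2 := by
      simp only [dotProduct, h1]
      have expand : ∀ j, x j * (A j i * x j - (if j = i then ∑ k, A k j * x k else 0) - A j i * x i)
          = A j i * (x j - x i) ^ 2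
            - A j i * x i ^ 2 + A j i * x i * x j
            - (if j = i then ∑ k, x i * (A k i * x k) else 0) := by
        intro j
        by_cases h : j = i
        · subst h
          rw [if_pos rfl, if_pos rfl, ← Finset.mul_sum]
          ring
        · simp only [if_neg h]
          ring
      rw [Finset.sum_congr rfl (fun j _ => expand j)]
      rw [Finset.sum_sub_distrib, Finset.sum_add_distrib, Finset.sum_sub_distrib]
      have e1 : ∑ j, A j i * x i ^ 2 = 0 := by
        rw [← Finset.sum_mul, hcol]; ring
      have e2 : ∑ j, A j i * x i * x j = ∑ k, x i * (A k i * x k) := by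
        apply Finset.sum_congr rfl; intro j _; ring
      have e3 : ∑ j, (if j = i then ∑ k, x i * (A k i * x k) else 0)
          = ∑ k, x i * (A k i * x k) := by simp
      rw [e1, e2, e3]; ring
    have hsx : star x = x := rfl
    rw [hsx]
    show 0 ≤ dotProduct x ((bform A (Pi.single i 1)).mulVec x)
    rw [key]
    apply Finset.sum_nonneg
    intro j _
    by_cases h : j = i
    · simp [h]
    · exact mul_nonneg (hoff j i h) (sq_nonneg _)
end

section
/- For any K×N real matrix C, any rate matrix A with all entries bounded in absolute value by a, and any standard basis vector V = e_i of ℝᴺ, one has Tr(C[diag(AV) − diag(V)A* − A diag(V)]C*) ≤ 3a · Tr(CC*). -/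
set_option linter.unnecessarySeqFocus false

lemma bform_trace_eq {N K : ℕ} (A : Matrix (Fin N) (Fin N) ℝ) (i : Fin N)
    (C : Matrix (Fin K) (Fin N) ℝ) :
    Matrix.trace (C * bform A (Pi.single i 1) * C.transpose) =
      ∑ r, ∑ j, A j i * (C r j ^ 2 - 2 * C r i * C r j) := by
  simp only [Matrix.trace, Matrix.diag, Matrix.mul_apply, Matrix.transpose_apply, bform,
    Matrix.sub_apply, Matrix.diagonal_apply, Matrix.mulVec, dotProduct,
    Pi.single_apply, Finset.sum_sub_distrib, mul_ite, ite_mul, mul_zero, zero_mul, mul_one,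
    Finset.sum_ite_eq, Finset.sum_ite_eq', Finset.mem_univ, if_true, Finset.sum_mul,
    Finset.mul_sum]
  congr 1; funext r
  rw [Finset.sum_comm]
  simp only [mul_sub, sub_mul, ite_mul, mul_ite, zero_mul, mul_zero, one_mul, mul_one,
    Finset.sum_sub_distrib, Finset.sum_ite_irrel, Finset.sum_const_zero,
    Finset.sum_ite_eq, Finset.sum_ite_eq', Finset.mem_univ, if_true]
  rw [← Finset.sum_sub_distrib, ← Finset.sum_sub_distrib, ← Finset.sum_sub_distrib]
  exact Finset.sum_congr rfl fun x _ => by ring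

lemma bform_row_bound {N K : ℕ} (A : Matrix (Fin N) (Fin N) ℝ) (a : ℝ)
    (hoff : ∀ j k : Fin N, j ≠ k → 0 ≤ A j k)
    (hcol : ∀ k : Fin N, ∑ j, A j k = 0)
    (habs : ∀ j k : Fin N, |A j k| ≤ a)
    (i : Fin N) (C : Matrix (Fin K) (Fin N) ℝ) (r : Fin K) :
    ∑ j, A j i * (C r j ^ 2 - 2 * C r i * C r j) ≤ 3 * a * ∑ j, C r j ^ 2 := by
  have ha : 0 ≤ a := le_trans (abs_nonneg _) (habs i i)
  have key : ∑ j, A j i * (C r j ^ 2 - 2 * C r i * C r j)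
      = ∑ j, A j i * (C r j - C r i) ^ 2 - (∑ j, A j i) * C r i ^ 2 := by
    rw [Finset.sum_mul, ← Finset.sum_sub_distrib]
    exact Finset.sum_congr rfl fun j _ => by ring
  rw [key, hcol i, zero_mul, sub_zero]
  have hsum : ∑ j, A j i * (C r j - C r i) ^ 2
      = ∑ j ∈ Finset.univ.erase i, A j i * (C r j - C r i) ^ 2 := by
    rw [← Finset.add_sum_erase _ _ (Finset.mem_univ i)]
    simp
  rw [hsum]
  have hAi : ∑ j ∈ Finset.univ.erase i, A j i ≤ a := by
    have : ∑ j ∈ Finset.univ.erase i, A j i = -A i i := by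
      have := Finset.add_sum_erase Finset.univ (fun j => A j i) (Finset.mem_univ i)
      have h2 := hcol i
      linarith [this, h2]
    rw [this]
    have := abs_le.mp (habs i i)
    linarith [this.1]
  have step1 : ∑ j ∈ Finset.univ.erase i, A j i * (C r j - C r i) ^ 2
      ≤ ∑ j ∈ Finset.univ.erase i, (2 * a * C r j ^ 2 + 2 * A j i * C r i ^ 2) := by
    apply Finset.sum_le_sum
    intro j hj
    have hji : j ≠ i := Finset.ne_of_mem_erase hj
    have h0 : 0 ≤ A j i := hoff j i hji
    have h1 : A j i ≤ a := le_trans (le_abs_self _) (habs j i)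
    nlinarith [sq_nonneg (C r j), sq_nonneg (C r i), sq_nonneg (C r j + C r i),
      sq_nonneg (C r j - C r i), mul_nonneg h0 (sq_nonneg (C r j - C r i))]
  have step2 : ∑ j ∈ Finset.univ.erase i, (2 * a * C r j ^ 2 + 2 * A j i * C r i ^ 2)
      = 2 * a * (∑ j ∈ Finset.univ.erase i, C r j ^ 2)
        + 2 * (∑ j ∈ Finset.univ.erase i, A j i) * C r i ^ 2 := by
    rw [Finset.sum_add_distrib, Finset.mul_sum, mul_assoc, Finset.sum_mul, Finset.mul_sum]
    congr 1 <;> exact Finset.sum_congr rfl fun j _ => by ring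
  have h3 : ∑ j ∈ Finset.univ.erase i, C r j ^ 2 ≤ ∑ j, C r j ^ 2 :=
    Finset.sum_le_sum_of_subset_of_nonneg (Finset.erase_subset _ _)
      (fun j _ _ => sq_nonneg _)
  have h4 : C r i ^ 2 ≤ ∑ j, C r j ^ 2 :=
    Finset.single_le_sum (fun j _ => sq_nonneg (C r j)) (Finset.mem_univ i)
  have hS : 0 ≤ ∑ j, C r j ^ 2 := Finset.sum_nonneg fun j _ => sq_nonneg _
  have hsplit : (∑ j ∈ Finset.univ.erase i, C r j ^ 2) + C r i ^ 2 = ∑ j, C r j ^ 2 := by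
    have h := Finset.add_sum_erase Finset.univ (fun j => C r j ^ 2) (Finset.mem_univ i)
    linarith
  calc ∑ j ∈ Finset.univ.erase i, A j i * (C r j - C r i) ^ 2
      ≤ 2 * a * (∑ j ∈ Finset.univ.erase i, C r j ^ 2)
        + 2 * (∑ j ∈ Finset.univ.erase i, A j i) * C r i ^ 2 := by
        rw [← step2]; exact step1
    _ ≤ 2 * a * (∑ j ∈ Finset.univ.erase i, C r j ^ 2) + 2 * a * C r i ^ 2 := by
        nlinarith [sq_nonneg (C r i)]
    _ = 2 * a * ((∑ j ∈ Finset.univ.erase i, C r j ^ 2) + C r i ^ 2) := by ring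
    _ = 2 * a * ∑ j, C r j ^ 2 := by rw [hsplit]
    _ ≤ 3 * a * ∑ j, C r j ^ 2 := by nlinarith

theorem stmt_3 {N K : ℕ} (A : Matrix (Fin N) (Fin N) ℝ) (a : ℝ)
    (hoff : ∀ j k : Fin N, j ≠ k → 0 ≤ A j k)
    (hcol : ∀ k : Fin N, ∑ j, A j k = 0)
    (habs : ∀ j k : Fin N, |A j k| ≤ a)
    (i : Fin N) (C : Matrix (Fin K) (Fin N) ℝ) :
    Matrix.trace (C * bform A (Pi.single i 1) * C.transpose) ≤
      3 * a * Matrix.trace (C * C.transpose) := by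
  have hR : Matrix.trace (C * C.transpose) = ∑ r, ∑ j, C r j ^ 2 := by
    simp [Matrix.trace, Matrix.diag, Matrix.mul_apply, Matrix.transpose_apply, sq]
  rw [bform_trace_eq, hR, Finset.mul_sum]
  exact Finset.sum_le_sum fun r _ => bform_row_bound A a hoff hcol habs i C r
end

section
/- If a sequence of nonnegative integrable functions g_n on [0,T] satisfies ∫_{(t,T]} g_{n+1}(u) du ≤ K ∫_{(t,T]} e^{K(u−t)} ∫_{(u,T]} g_n(s) ds du for all t and n, with K ≥ 0, then ∫_{(t,T]} g_{n}(u) du ≤ ([T K e^{TK}]ⁿ / n!) ∫_{(t,T]} g_0(u) du for all n, and hence Σ_n (∫_{(t,T]} g_n(u) du)^{1/2} < ∞. -/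
open MeasureTheory

open intervalIntegral in
lemma aux_pow_int (t T : ℝ) (htT : t ≤ T) (n : ℕ) :
    (∫ u in Set.Ioc t T, (T - u) ^ n) = (T - t) ^ (n + 1) / (n + 1) := by
  rw [← integral_of_le htT, integral_comp_sub_left (fun x => x ^ n) T]
  simp [integral_pow]

theorem stmt_13 (T K : ℝ) (hT : 0 < T) (hK : 0 ≤ K) (g : ℕ → ℝ → ℝ)
    (hg0 : ∀ n, ∀ u ∈ Set.Icc (0 : ℝ) T, 0 ≤ g n u)
    (hgint : ∀ n, IntegrableOn (g n) (Set.Icc (0 : ℝ) T))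
    (hiter : ∀ n, ∀ t ∈ Set.Icc (0 : ℝ) T,
      (∫ u in Set.Ioc t T, g (n + 1) u) ≤
        K * ∫ u in Set.Ioc t T, Real.exp (K * (u - t)) * ∫ s in Set.Ioc u T, g n s) :
    ∀ t ∈ Set.Icc (0 : ℝ) T,
      (∀ n : ℕ, (∫ u in Set.Ioc t T, g n u) ≤
        (T * K * Real.exp (T * K)) ^ n / (Nat.factorial n) * ∫ u in Set.Ioc t T, g 0 u) ∧
      Summable (fun n : ℕ => Real.sqrt (∫ u in Set.Ioc t T, g n u)) := by
  set C := K * Real.exp (T * K) with hC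
  have hC0 : 0 ≤ C := mul_nonneg hK (Real.exp_pos _).le
  have hFnn : ∀ n, ∀ u ∈ Set.Icc (0:ℝ) T, 0 ≤ ∫ s in Set.Ioc u T, g n s := by
    intro n u hu
    apply setIntegral_nonneg measurableSet_Ioc
    intro s hs
    exact hg0 n s ⟨le_trans hu.1 hs.1.le, hs.2⟩
  have hFint : ∀ n, ∀ u ∈ Set.Icc (0:ℝ) T, IntegrableOn (g n) (Set.Ioc u T) :=
    fun n u hu => (hgint n).mono_set (fun s hs => ⟨le_trans hu.1 hs.1.le, hs.2⟩)
  have key : ∀ n, ∀ t ∈ Set.Icc (0:ℝ) T,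
      (∫ u in Set.Ioc t T, g n u) ≤
        C ^ n * (T - t) ^ n / (Nat.factorial n) * ∫ u in Set.Ioc t T, g 0 u := by
    intro n
    induction n with
    | zero => intro t ht; simp
    | succ n ih =>
      intro t ht
      have htT : t ≤ T := ht.2
      have h1 := hiter n t ht
      set F0t := ∫ u in Set.Ioc t T, g 0 u with hF0t
      have step : (∫ u in Set.Ioc t T, Real.exp (K * (u - t)) * ∫ s in Set.Ioc u T, g n s)
          ≤ ∫ u in Set.Ioc t T,
              (Real.exp (T * K) * (C ^ n / (Nat.factorial n)) * F0t) * (T - u) ^ n := by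
        apply integral_mono_of_nonneg
        · filter_upwards [ae_restrict_mem measurableSet_Ioc] with u hu
          exact mul_nonneg (Real.exp_pos _).le (hFnn n u ⟨le_trans ht.1 hu.1.le, hu.2⟩)
        · exact (Continuous.integrableOn_Ioc (by fun_prop))
        · filter_upwards [ae_restrict_mem measurableSet_Ioc] with u hu
          have hu' : u ∈ Set.Icc (0:ℝ) T := ⟨le_trans ht.1 hu.1.le, hu.2⟩
          have e1 : Real.exp (K * (u - t)) ≤ Real.exp (T * K) := by
            apply Real.exp_le_exp.2
            nlinarith [ht.1, hu.2, hu.1]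
          have e2 := ih u hu'
          have e3 : (∫ s in Set.Ioc u T, g 0 s) ≤ F0t := by
            apply setIntegral_mono_set (hFint 0 t ht)
            · filter_upwards [ae_restrict_mem measurableSet_Ioc] with s hs
              exact hg0 0 s ⟨le_trans ht.1 hs.1.le, hs.2⟩
            · exact HasSubset.Subset.eventuallyLE (Set.Ioc_subset_Ioc_left hu.1.le)
          have hTu : 0 ≤ T - u := by linarith [hu.2]
          have hb0 : 0 ≤ C ^ n * (T - u) ^ n / (Nat.factorial n) :=
            div_nonneg (mul_nonneg (pow_nonneg hC0 n) (pow_nonneg hTu n))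
              (Nat.cast_nonneg _)
          have e4 : (∫ s in Set.Ioc u T, g n s)
              ≤ C ^ n * (T - u) ^ n / (Nat.factorial n) * F0t :=
            le_trans e2 (by
              apply mul_le_mul_of_nonneg_left e3 hb0)
          calc Real.exp (K * (u - t)) * ∫ s in Set.Ioc u T, g n s
              ≤ Real.exp (T * K) * (C ^ n * (T - u) ^ n / (Nat.factorial n) * F0t) := by
                apply mul_le_mul e1 e4
                  (hFnn n u hu') (Real.exp_pos _).le
            _ = (Real.exp (T * K) * (C ^ n / (Nat.factorial n)) * F0t) * (T - u) ^ n := by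
                ring
      have hI : (∫ u in Set.Ioc t T, (T - u) ^ n) = (T - t) ^ (n + 1) / (n + 1) := by
        exact aux_pow_int t T htT n
      have step2 : (∫ u in Set.Ioc t T,
              (Real.exp (T * K) * (C ^ n / (Nat.factorial n)) * F0t) * (T - u) ^ n)
          = (Real.exp (T * K) * (C ^ n / (Nat.factorial n)) * F0t)
              * ((T - t) ^ (n + 1) / (n + 1)) := by
        rw [integral_const_mul, hI]
      have hfinal : K * ((Real.exp (T * K) * (C ^ n / (Nat.factorial n)) * F0t)
              * ((T - t) ^ (n + 1) / (n + 1)))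
          = C ^ (n + 1) * (T - t) ^ (n + 1) / (Nat.factorial (n + 1)) * F0t := by
        rw [hC]
        have hn : (Nat.factorial (n + 1) : ℝ) = (n + 1) * Nat.factorial n := by
          push_cast [Nat.factorial_succ]; ring
        rw [hn]
        have h1 : (Nat.factorial n : ℝ) ≠ 0 := Nat.cast_ne_zero.2 (Nat.factorial_ne_zero n)
        have h2 : ((n : ℝ) + 1) ≠ 0 := by positivity
        field_simp
        ring
      calc (∫ u in Set.Ioc t T, g (n + 1) u)
          ≤ K * ∫ u in Set.Ioc t T, Real.exp (K * (u - t)) * ∫ s in Set.Ioc u T, g n s := h1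
        _ ≤ K * ((Real.exp (T * K) * (C ^ n / (Nat.factorial n)) * F0t)
              * ((T - t) ^ (n + 1) / (n + 1))) := by
            rw [← step2]; exact mul_le_mul_of_nonneg_left step hK
        _ = C ^ (n + 1) * (T - t) ^ (n + 1) / (Nat.factorial (n + 1)) * F0t := hfinal
  intro t ht
  have hbound : ∀ n : ℕ, (∫ u in Set.Ioc t T, g n u) ≤
      (T * K * Real.exp (T * K)) ^ n / (Nat.factorial n) * ∫ u in Set.Ioc t T, g 0 u := by
    intro n
    refine le_trans (key n t ht) ?_
    have h1 : C ^ n * (T - t) ^ n ≤ (T * C) ^ n := by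
      have hTt : (T - t) ^ n ≤ T ^ n :=
        pow_le_pow_left₀ (by linarith [ht.2]) (by linarith [ht.1]) n
      have h3 : (T * C) ^ n = C ^ n * T ^ n := by rw [mul_pow T C n]; ring
      rw [h3]
      exact mul_le_mul_of_nonneg_left hTt (pow_nonneg hC0 n)
    have h2 : (T * K * Real.exp (T * K)) = T * C := by rw [hC]; ring
    rw [h2]
    apply mul_le_mul_of_nonneg_right _ (hFnn 0 t ht)
    have hfac : (0:ℝ) < (Nat.factorial n : ℝ) := by
      exact_mod_cast Nat.factorial_pos n
    exact (div_le_div_iff_of_pos_right hfac).2 h1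
  refine ⟨hbound, ?_⟩
  set a := T * K * Real.exp (T * K) with ha
  have ha0 : 0 ≤ a := mul_nonneg (mul_nonneg hT.le hK) (Real.exp_pos _).le
  set M := ∫ u in Set.Ioc t T, g 0 u with hM
  have hM0 : 0 ≤ M := hFnn 0 t ht
  have hs1 : Summable (fun n : ℕ => Real.sqrt (a ^ n / Nat.factorial n)) := by
    apply Summable.of_nonneg_of_le (fun n => Real.sqrt_nonneg _)
      (f := fun n : ℕ => ((2 * a) ^ n / Nat.factorial n + (1 / 2 : ℝ) ^ n) / 2)
    · intro n
      set x := (2 * a) ^ n / (Nat.factorial n : ℝ) with hx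
      set y := ((1 / 2 : ℝ)) ^ n with hy
      have hx0 : 0 ≤ x := by positivity
      have hy0 : 0 ≤ y := by positivity
      have hxy : a ^ n / (Nat.factorial n : ℝ) = x * y := by
        rw [hx, hy]
        have hfac : ((Nat.factorial n : ℝ)) ≠ 0 := Nat.cast_ne_zero.2 (Nat.factorial_ne_zero n)
        rw [mul_pow, div_mul_eq_mul_div]
        congr 1
        rw [← mul_pow, ← mul_pow, ha]
        ring
      rw [hxy, Real.sqrt_mul hx0]
      nlinarith [Real.sq_sqrt hx0, Real.sq_sqrt hy0,
        sq_nonneg (Real.sqrt x - Real.sqrt y), Real.sqrt_nonneg x, Real.sqrt_nonneg y]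
    · exact ((Real.summable_pow_div_factorial (2 * a)).add
        (summable_geometric_of_lt_one (by norm_num) (by norm_num))).div_const 2
  apply Summable.of_nonneg_of_le (fun n => Real.sqrt_nonneg _)
    (f := fun n : ℕ => Real.sqrt (a ^ n / Nat.factorial n) * Real.sqrt M)
  · intro n
    have h1 : (∫ u in Set.Ioc t T, g n u) ≤ a ^ n / Nat.factorial n * M := hbound n
    calc Real.sqrt (∫ u in Set.Ioc t T, g n u)
        ≤ Real.sqrt (a ^ n / Nat.factorial n * M) := Real.sqrt_le_sqrt h1
      _ = Real.sqrt (a ^ n / Nat.factorial n) * Real.sqrt M :=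
          Real.sqrt_mul (by positivity) M
  · exact hs1.mul_right _
end
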